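/- For any M×N real matrix G, any μ > 0, and any v ∈ ℝ^M, the deblurring operator satisfies ‖μ (G Gᵀ + μ I)⁻¹ v‖₂ ≤ ‖v‖₂; i.e., the map v ↦ μ(G Gᵀ + μ I)⁻¹ v is a contraction, so the WRI data residual δdᵉ = μ(G Gᵀ + μ I)⁻¹ δdʳ is never larger in norm than the FWI data residual δdʳ. -/

import Mathlib

open Matrix

/-- For any M×N real matrix `G`, any `μ > 0`, and any `v ∈ ℝ^M`, the deblurring operator
satisfies `‖μ (G Gᵀ + μ I)⁻¹ v‖₂ ≤ ‖v‖₂`; i.e., the map `v ↦ μ(G Gᵀ + μ I)⁻¹ v` is a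
contraction, so the WRI data residual is never larger in norm than the FWI data residual. -/
theorem stmt_16 (N M : ℕ) (_hN : 0 < N) (_hM : 0 < M)
    (G : Matrix (Fin M) (Fin N) ℝ) (μ : ℝ) (hμ : 0 < μ)
    (v : EuclideanSpace ℝ (Fin M)) :
    ‖((WithLp.equiv 2 (Fin M → ℝ)).symm
        (μ • (G * Gᵀ + μ • (1 : Matrix (Fin M) (Fin M) ℝ))⁻¹.mulVec
          (WithLp.equiv 2 (Fin M → ℝ) v)))‖ ≤ ‖v‖ := by
  set A := G * Gᵀ + μ • (1 : Matrix (Fin M) (Fin M) ℝ) with hAdef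
  have hGS : (G * Gᵀ).PosSemidef := by
    simpa using posSemidef_self_mul_conjTranspose G
  have hμ1 : (μ • (1 : Matrix (Fin M) (Fin M) ℝ)).PosDef := by
    rw [smul_one_eq_diagonal]
    exact posDef_diagonal_iff.mpr fun _ => hμ
  have hApd : A.PosDef := Matrix.PosDef.posSemidef_add hGS hμ1
  have hdet : IsUnit A.det := isUnit_iff_ne_zero.mpr hApd.det_pos.ne'
  set w : Fin M → ℝ := A⁻¹.mulVec (WithLp.equiv 2 (Fin M → ℝ) v) with hw
  have hAw : A.mulVec w = WithLp.equiv 2 (Fin M → ℝ) v := by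
    rw [hw, mulVec_mulVec, mul_nonsing_inv _ hdet, one_mulVec]
  set W : EuclideanSpace ℝ (Fin M) := (WithLp.equiv 2 (Fin M → ℝ)).symm w with hW
  have hv : v = (WithLp.equiv 2 (Fin M → ℝ)).symm (A.mulVec w) := by
    rw [hAw]; simp
  have key : μ * ‖W‖ ^ 2 ≤ inner ℝ W v := by
    rw [hv, hW, WithLp.equiv_symm_apply, EuclideanSpace.inner_toLp_toLp, dotProduct_comm]
    have h1 : star w ⬝ᵥ A.mulVec w = w ⬝ᵥ (G * Gᵀ).mulVec w + μ * (w ⬝ᵥ w) := by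
      simp [hAdef, add_mulVec, dotProduct_add, smul_mulVec, one_mulVec,
        dotProduct_smul, smul_eq_mul]
    rw [h1]
    have h2 : (0:ℝ) ≤ w ⬝ᵥ (G * Gᵀ).mulVec w := by
      simpa using hGS.dotProduct_mulVec_nonneg w
    have h3 : w ⬝ᵥ w = ‖W‖ ^ 2 := by
      rw [← real_inner_self_eq_norm_sq, hW, WithLp.equiv_symm_apply, EuclideanSpace.inner_toLp_toLp]
      simp [dotProduct]
    rw [show ‖WithLp.toLp 2 w‖ = ‖W‖ from rfl]
    nlinarith
  have cs : inner ℝ W v ≤ ‖W‖ * ‖v‖ := real_inner_le_norm W v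
  have hnorm : ‖((WithLp.equiv 2 (Fin M → ℝ)).symm (μ • w))‖ = μ * ‖W‖ := by
    have : (WithLp.equiv 2 (Fin M → ℝ)).symm (μ • w) = μ • W := by
      rw [hW]; rfl
    rw [this, norm_smul]
    simp [abs_of_pos hμ]
  rw [hnorm]
  rcases eq_or_ne (‖W‖) 0 with h0 | h0
  · rw [h0, mul_zero]; exact norm_nonneg v
  · have hWpos : 0 < ‖W‖ := lt_of_le_of_ne (norm_nonneg W) (Ne.symm h0)
    nlinarith
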